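/- In the Lauricella system, the functions F_k(z,δ) = w̄_k ∫_{δ_k} η_z (k = 1,…,n+2) satisfy the linear relation Σ_{k=1}^{n+2} Im(w_k) F_k = 0, where w_k = exp(iπ(μ_0 + ⋯ + μ_{k−1})). Equivalently for the model one-dimensional case n = 0 with μ_0 + μ_1 < 2: ∫ over a closed contour of the multivalued form vanishes, giving Im(w_1)F_1 + Im(w_2)F_2 = 0. -/

import Mathlib

open Real MeasureTheory
open Real MeasureTheory

lemma realBeta (a b : ℝ) (ha : 0 < a) (hb : 0 < b) :
    ∫ t in Set.Ioo (0:ℝ) 1, t ^ (a-1) * (1-t) ^ (b-1)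
      = Real.Gamma a * Real.Gamma b / Real.Gamma (a+b) := by
  have h := Complex.Gamma_mul_Gamma_eq_betaIntegral (s := (a:ℂ)) (t := (b:ℂ))
    (by simpa using ha) (by simpa using hb)
  have hbeta : Complex.betaIntegral a b
      = ((∫ t in Set.Ioo (0:ℝ) 1, t ^ (a-1) * (1-t) ^ (b-1) : ℝ) : ℂ) := by
    rw [Complex.betaIntegral, intervalIntegral.integral_of_le zero_le_one,
      MeasureTheory.integral_Ioc_eq_integral_Ioo]
    rw [show ((∫ t in Set.Ioo (0:ℝ) 1, t ^ (a-1) * (1-t) ^ (b-1) : ℝ) : ℂ) = ∫ t in Set.Ioo (0:ℝ) 1, ((t ^ (a-1) * (1-t) ^ (b-1) : ℝ) : ℂ) from (integral_ofReal).symm]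
    refine setIntegral_congr_fun measurableSet_Ioo (fun x hx => ?_)
    have h1 : (x:ℂ) ^ ((a:ℂ) - 1) = ((x ^ (a-1) : ℝ) : ℂ) := by
      rw [Complex.ofReal_cpow hx.1.le]; push_cast; ring_nf
    have h2 : (1 - (x:ℂ)) ^ ((b:ℂ) - 1) = (((1-x) ^ (b-1) : ℝ) : ℂ) := by
      rw [Complex.ofReal_cpow (by linarith [hx.2] : (0:ℝ) ≤ 1 - x)]; push_cast; ring_nf
    rw [h1, h2, ← Complex.ofReal_mul]
  rw [hbeta, Complex.Gamma_ofReal, Complex.Gamma_ofReal, ← Complex.ofReal_add,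
    Complex.Gamma_ofReal, ← Complex.ofReal_mul, ← Complex.ofReal_mul] at h
  have := Complex.ofReal_injective h
  have hG : Real.Gamma (a+b) ≠ 0 := (Real.Gamma_pos_of_pos (by linarith)).ne'
  field_simp
  linarith [this]


lemma int1 (z₀ c μ₀ μ₁ : ℝ) (hc : 0 < c) :
    ∫ ξ in Set.Ioo z₀ (z₀ + c), (ξ - z₀) ^ (-μ₀) * (z₀ + c - ξ) ^ (-μ₁)
      = c ^ (1 - μ₀ - μ₁) * ∫ t in Set.Ioo (0:ℝ) 1, t ^ ((1-μ₀)-1) * (1-t) ^ ((1-μ₁)-1) := by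
  have himg : (fun t : ℝ => z₀ + c * t) '' Set.Ioo 0 1 = Set.Ioo z₀ (z₀ + c) := by
    ext y
    simp only [Set.mem_image, Set.mem_Ioo]
    constructor
    · rintro ⟨t, ⟨ht0, ht1⟩, rfl⟩
      constructor <;> nlinarith
    · rintro ⟨h1, h2⟩
      refine ⟨(y - z₀)/c, ⟨div_pos (by linarith) hc, by rw [div_lt_one hc]; linarith⟩, by field_simp; ring⟩
  have hder : ∀ x : ℝ, HasDerivAt (fun t : ℝ => z₀ + c * t) c x := fun x => by
    simpa using (((hasDerivAt_id x).const_mul c).const_add z₀)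
  have hinj : Set.InjOn (fun t : ℝ => z₀ + c * t) (Set.Ioo 0 1) := fun x _ y _ h => by
    dsimp at h
    exact mul_left_cancel₀ hc.ne' (by linarith)
  rw [← himg, integral_image_eq_integral_abs_deriv_smul measurableSet_Ioo
    (fun x _ => (hder x).hasDerivWithinAt) hinj]
  rw [← integral_const_mul]
  refine setIntegral_congr_fun measurableSet_Ioo (fun t ht => ?_)
  obtain ⟨ht0, ht1⟩ := ht
  have e1 : z₀ + c * t - z₀ = c * t := by ring
  have e2 : z₀ + c - (z₀ + c * t) = c * (1 - t) := by ring
  simp only [smul_eq_mul, e1, e2]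
  rw [Real.mul_rpow hc.le ht0.le, Real.mul_rpow hc.le (by linarith), abs_of_pos hc]
  rw [show (1:ℝ) - μ₀ - μ₁ = -μ₀ + -μ₁ + 1 by ring, Real.rpow_add hc, Real.rpow_add hc,
    Real.rpow_one]
  ring

lemma int2 (z₀ c μ₀ μ₁ : ℝ) (hc : 0 < c) :
    ∫ ξ in Set.Ioi (z₀ + c), (ξ - z₀) ^ (-μ₀) * (ξ - (z₀ + c)) ^ (-μ₁)
      = c ^ (1 - μ₀ - μ₁) *
        ∫ t in Set.Ioo (0:ℝ) 1, t ^ ((μ₀+μ₁-1)-1) * (1-t) ^ ((1-μ₁)-1) := by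
  have himg : (fun t : ℝ => z₀ + c / t) '' Set.Ioo 0 1 = Set.Ioi (z₀ + c) := by
    ext y
    simp only [Set.mem_image, Set.mem_Ioo, Set.mem_Ioi]
    constructor
    · rintro ⟨t, ⟨ht0, ht1⟩, rfl⟩
      have : c < c / t := by rw [lt_div_iff₀ ht0]; nlinarith
      linarith
    · intro hy
      have hy0 : 0 < y - z₀ := by linarith
      refine ⟨c / (y - z₀), ⟨div_pos hc hy0, by rw [div_lt_one hy0]; linarith⟩, ?_⟩
      field_simp
      ring
  have hder : ∀ x ∈ Set.Ioo (0:ℝ) 1, HasDerivAt (fun t : ℝ => z₀ + c / t) (-(c / x ^ 2)) x := by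
    intro x hx
    have := ((hasDerivAt_inv hx.1.ne').const_mul c).const_add z₀
    simpa [div_eq_mul_inv, neg_div, mul_div_assoc] using this
  have hinj : Set.InjOn (fun t : ℝ => z₀ + c / t) (Set.Ioo 0 1) := by
    intro x hx y hy h
    dsimp at h
    have hcxy : c / x = c / y := by linarith
    have hx0 := hx.1.ne'
    have hy0 := hy.1.ne'
    field_simp at hcxy
    linarith
  rw [← himg, integral_image_eq_integral_abs_deriv_smul measurableSet_Ioo
    (fun x hx => (hder x hx).hasDerivWithinAt) hinj]
  rw [← integral_const_mul]
  refine setIntegral_congr_fun measurableSet_Ioo (fun t ht => ?_)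
  obtain ⟨ht0, ht1⟩ := ht
  have e1 : z₀ + c / t - z₀ = c / t := by ring
  have e2 : z₀ + c / t - (z₀ + c) = c * (1 - t) / t := by field_simp; ring
  have habs : |(-(c / t ^ 2))| = c / t ^ 2 := by
    rw [abs_neg, abs_of_pos (by positivity)]
  simp only [smul_eq_mul, e1, e2, habs]
  have h1t : (0:ℝ) < 1 - t := by linarith
  have A : (c/t) ^ (-μ₀) = c^(-μ₀) * t^μ₀ := by
    rw [Real.div_rpow hc.le ht0.le, div_eq_mul_inv, Real.rpow_neg ht0.le μ₀, inv_inv]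
  have B : (c*(1-t)/t) ^ (-μ₁) = c^(-μ₁) * (1-t)^(-μ₁) * t^μ₁ := by
    rw [Real.div_rpow (by positivity) ht0.le, Real.mul_rpow hc.le h1t.le,
      div_eq_mul_inv, Real.rpow_neg ht0.le μ₁, inv_inv]
  have C : c / t^2 = c * t^(-2:ℝ) := by
    rw [Real.rpow_neg ht0.le, show ((2:ℝ)) = ((2:ℕ):ℝ) by norm_num, Real.rpow_natCast,
      div_eq_mul_inv]
  have D : c ^ (1 - μ₀ - μ₁) = c * (c^(-μ₀) * c^(-μ₁)) := by
    rw [← Real.rpow_add hc, show (1:ℝ) - μ₀ - μ₁ = 1 + (-μ₀ + -μ₁) by ring,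
      Real.rpow_add hc, Real.rpow_one]
  have E : t ^ (μ₀ + μ₁ - 1 - 1) = t^μ₀ * t^μ₁ * t^(-2:ℝ) := by
    rw [← Real.rpow_add ht0, ← Real.rpow_add ht0]
    ring_nf
  have F : ((1:ℝ)-t) ^ (1 - μ₁ - 1) = (1-t)^(-μ₁) := by norm_num
  rw [A, B, C, D, E, F]
  ring

lemma sinkey (μ₀ μ₁ : ℝ) (hμ₀ : μ₀ ∈ Set.Ioo (0 : ℝ) 1) (hμ₁ : μ₁ ∈ Set.Ioo (0 : ℝ) 1)
    (hlow : 1 < μ₀ + μ₁) (hhigh : μ₀ + μ₁ < 2) :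
    Real.sin (π * μ₀) *
        (Real.Gamma (1-μ₀) * Real.Gamma (1-μ₁) / Real.Gamma (1-μ₀ + (1-μ₁))) +
      Real.sin (π * (μ₀ + μ₁)) *
        (Real.Gamma (μ₀+μ₁-1) * Real.Gamma (1-μ₁) / Real.Gamma (μ₀+μ₁-1 + (1-μ₁))) = 0 := by
  obtain ⟨h0, h1⟩ := hμ₀
  obtain ⟨h2, h3⟩ := hμ₁
  have hG0 : 0 < Real.Gamma μ₀ := Real.Gamma_pos_of_pos h0
  have hG1 : 0 < Real.Gamma (1-μ₀) := Real.Gamma_pos_of_pos (by linarith)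
  have hG2 : 0 < Real.Gamma (1-μ₁) := Real.Gamma_pos_of_pos (by linarith)
  have hG3 : 0 < Real.Gamma (1-μ₀ + (1-μ₁)) := Real.Gamma_pos_of_pos (by linarith)
  have hG4 : 0 < Real.Gamma (μ₀+μ₁-1) := Real.Gamma_pos_of_pos (by linarith)
  have hs0 : 0 < Real.sin (π * μ₀) :=
    Real.sin_pos_of_pos_of_lt_pi (by positivity)
      (by nlinarith [Real.pi_pos])
  have hss : Real.sin (π * (μ₀ + μ₁ - 1)) = -Real.sin (π * (μ₀ + μ₁)) := by
    rw [show π * (μ₀ + μ₁ - 1) = π * (μ₀ + μ₁) - π by ring, Real.sin_sub_pi]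
  have hs1 : 0 < Real.sin (π * (μ₀ + μ₁ - 1)) :=
    Real.sin_pos_of_pos_of_lt_pi (by nlinarith [Real.pi_pos]) (by nlinarith [Real.pi_pos])
  have R1 := Real.Gamma_mul_Gamma_one_sub μ₀
  have R2 := Real.Gamma_mul_Gamma_one_sub (μ₀ + μ₁ - 1)
  rw [show (1:ℝ) - (μ₀ + μ₁ - 1) = 1-μ₀ + (1-μ₁) by ring] at R2
  have R1' : Real.sin (π * μ₀) * (Real.Gamma μ₀ * Real.Gamma (1-μ₀)) = π := by
    rw [R1]; field_simp
  have R2' : Real.sin (π * (μ₀+μ₁)) * (Real.Gamma (μ₀+μ₁-1) * Real.Gamma (1-μ₀+(1-μ₁)))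
      = -π := by
    have h' : Real.sin (π * (μ₀+μ₁)) = -Real.sin (π * (μ₀+μ₁-1)) := by linarith
    rw [R2, h']
    field_simp
  rw [show Real.Gamma (μ₀+μ₁-1 + (1-μ₁)) = Real.Gamma μ₀ by ring_nf]
  field_simp
  nlinarith [mul_pos hG2 (mul_pos hG0 hG3), R1', R2',
    mul_le_mul_of_nonneg_left (le_of_eq R1') (le_of_lt hG2)]

/-- model one-dimensional case `n = 0` of the Lauricella relation
`∑_k Im(w_k) F_k = 0`. For `μ₀, μ₁ ∈ (0,1)` with `1 < μ₀ + μ₁ < 2` (the lower bound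
ensuring convergence of the integral over `[z₁, ∞)`), real points `z₀ < z₁`, and
`w₁ = e^{iπμ₀}`, `w₂ = e^{iπ(μ₀+μ₁)}`, the (real, positively determined) periods
`F₁ = ∫_{z₀}^{z₁} (ξ−z₀)^{−μ₀}(z₁−ξ)^{−μ₁} dξ` and
`F₂ = ∫_{z₁}^{∞} (ξ−z₀)^{−μ₀}(ξ−z₁)^{−μ₁} dξ` satisfy
`Im(w₁) F₁ + Im(w₂) F₂ = 0`. -/
theorem stmt14 (μ₀ μ₁ : ℝ) (hμ₀ : μ₀ ∈ Set.Ioo (0 : ℝ) 1) (hμ₁ : μ₁ ∈ Set.Ioo (0 : ℝ) 1)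
    (hlow : 1 < μ₀ + μ₁) (hhigh : μ₀ + μ₁ < 2) (z₀ z₁ : ℝ) (hz : z₀ < z₁) :
    Real.sin (π * μ₀) * (∫ ξ in z₀..z₁, (ξ - z₀) ^ (-μ₀) * (z₁ - ξ) ^ (-μ₁)) +
      Real.sin (π * (μ₀ + μ₁)) * (∫ ξ in Set.Ioi z₁, (ξ - z₀) ^ (-μ₀) * (ξ - z₁) ^ (-μ₁))
      = 0 := by
  have hc : 0 < z₁ - z₀ := by linarith
  have hz1 : z₀ + (z₁ - z₀) = z₁ := by ring
  have I1 := int1 z₀ (z₁ - z₀) μ₀ μ₁ hc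
  have I2 := int2 z₀ (z₁ - z₀) μ₀ μ₁ hc
  rw [hz1] at I1 I2
  rw [intervalIntegral.integral_of_le hz.le, MeasureTheory.integral_Ioc_eq_integral_Ioo,
    I1, I2, realBeta (1-μ₀) (1-μ₁) (by linarith [hμ₀.2]) (by linarith [hμ₁.2]),
    realBeta (μ₀+μ₁-1) (1-μ₁) (by linarith) (by linarith [hμ₁.2])]
  have key := sinkey μ₀ μ₁ hμ₀ hμ₁ hlow hhigh
  linear_combination ((z₁ - z₀) ^ (1 - μ₀ - μ₁)) * key
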